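/- Fix d ∈ ℂ, σ > 0. For the Ricean fading channel with conditional output density w(y|x) (density of Hx + Z where H ~ 𝒩_ℂ(d,1), Z ~ 𝒩_ℂ(0,σ²) independent), the Bhattacharyya coefficient satisfies ∫_ℂ √(w(y|x)·w(y|x')) dμ(y) = (2√(|x|²+σ²)·√(|x'|²+σ²))/(|x|²+|x'|²+2σ²) · exp(-|d|²·|x-x'|²/(2(|x|²+|x'|²+2σ²))) for all x, x' ∈ ℂ. -/

import Mathlib

open Real Complex MeasureTheory

/-- Conditional output density of the Ricean fading channel:
`Y = H x + Z` with `H ~ 𝒩_ℂ(d,1)`, `Z ~ 𝒩_ℂ(0,σ²)`. -/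
noncomputable def riceDensity (d : ℂ) (σ : ℝ) (x y : ℂ) : ℝ :=
  (1 / (π * (‖x‖ ^ 2 + σ ^ 2)))
    * Real.exp (-(‖y - d * x‖) ^ 2 / (‖x‖ ^ 2 + σ ^ 2))

lemma gauss_int_complex (k : ℝ) (hk : 0 < k) (c : ℂ) :
    ∫ y : ℂ, Real.exp (-(k * ‖y - c‖ ^ 2)) = π / k := by
  have h1 : ∫ y : ℂ, Real.exp (-(k * ‖y - c‖ ^ 2))
      = ∫ y : ℂ, Real.exp (-(k * ‖y‖ ^ 2)) :=
    integral_sub_right_eq_self (fun y : ℂ => Real.exp (-(k * ‖y‖ ^ 2))) c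
  rw [h1]
  have h2 : ∫ y : ℂ, Real.exp (-(k * ‖y‖ ^ 2))
      = ∫ p : ℝ × ℝ, Real.exp (-k * p.1 ^ 2) * Real.exp (-k * p.2 ^ 2) := by
    rw [← (Complex.volume_preserving_equiv_real_prod).integral_comp
      Complex.measurableEquivRealProd.measurableEmbedding]
    congr 1
    ext y
    rw [← Real.exp_add, Complex.measurableEquivRealProd]
    simp [Complex.sq_norm, Complex.normSq_apply, Complex.equivRealProd]
    ring
  rw [h2, Measure.volume_eq_prod,
    integral_prod_mul (f := fun t : ℝ => Real.exp (-k * t ^ 2))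
      (g := fun t : ℝ => Real.exp (-k * t ^ 2)),
    integral_gaussian]
  exact Real.mul_self_sqrt (by positivity)

lemma sq_id_complex (a b : ℝ) (ha : 0 < a) (hb : 0 < b) (y m m' : ℂ) :
    ‖y - m‖ ^ 2 / a + ‖y - m'‖ ^ 2 / b
      = (a + b) / (a * b) * ‖y - ((b : ℂ) * m + (a : ℂ) * m') / ((a : ℂ) + (b : ℂ))‖ ^ 2
        + ‖m - m'‖ ^ 2 / (a + b) := by
  have hab : (a : ℂ) + b ≠ 0 := by norm_cast; positivity
  have hab' : a + b ≠ 0 := by positivity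
  simp only [Complex.sq_norm, Complex.normSq_apply, Complex.sub_re, Complex.sub_im,
    Complex.div_re, Complex.div_im, Complex.add_re, Complex.add_im, Complex.mul_re,
    Complex.mul_im, Complex.ofReal_re, Complex.ofReal_im, Complex.normSq_apply]
  field_simp
  ring

lemma bhatta_aux (a b : ℝ) (ha : 0 < a) (hb : 0 < b) (m m' : ℂ) :
    ∫ y : ℂ, Real.sqrt ((1 / (π * a)) * Real.exp (-‖y - m‖ ^ 2 / a)
        * ((1 / (π * b)) * Real.exp (-‖y - m'‖ ^ 2 / b)))
      = 2 * Real.sqrt a * Real.sqrt b / (a + b)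
        * Real.exp (-‖m - m'‖ ^ 2 / (2 * (a + b))) := by
  have hπ : (0:ℝ) < π := Real.pi_pos
  set c : ℂ := ((b : ℂ) * m + (a : ℂ) * m') / ((a : ℂ) + (b : ℂ)) with hc_def
  set D : ℝ := ‖m - m'‖ ^ 2 with hD_def
  set k : ℝ := (a + b) / (2 * (a * b)) with hk_def
  have hk : 0 < k := by positivity
  set C : ℝ := (1 / (π * (Real.sqrt a * Real.sqrt b))) * Real.exp (-(D / (2 * (a + b))))
    with hC_def
  have hsa : Real.sqrt a ^ 2 = a := Real.sq_sqrt ha.le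
  have hsb : Real.sqrt b ^ 2 = b := Real.sq_sqrt hb.le
  have hsa' : (0:ℝ) < Real.sqrt a := Real.sqrt_pos.mpr ha
  have hsb' : (0:ℝ) < Real.sqrt b := Real.sqrt_pos.mpr hb
  have hpt : ∀ y : ℂ, Real.sqrt ((1 / (π * a)) * Real.exp (-‖y - m‖ ^ 2 / a)
        * ((1 / (π * b)) * Real.exp (-‖y - m'‖ ^ 2 / b)))
      = C * Real.exp (-(k * ‖y - c‖ ^ 2)) := by
    intro y
    rw [show (1 / (π * a)) * Real.exp (-‖y - m‖ ^ 2 / a)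
          * ((1 / (π * b)) * Real.exp (-‖y - m'‖ ^ 2 / b))
        = ((1 / (π * (Real.sqrt a * Real.sqrt b))) ^ 2)
          * Real.exp (-(‖y - m‖ ^ 2 / a + ‖y - m'‖ ^ 2 / b)) by
      rw [show -(‖y - m‖ ^ 2 / a + ‖y - m'‖ ^ 2 / b)
          = -‖y - m‖ ^ 2 / a + -‖y - m'‖ ^ 2 / b by ring,
        Real.exp_add]
      field_simp
      ring_nf
      rw [hsa, hsb]]
    rw [Real.sqrt_mul (by positivity), Real.sqrt_sq (by positivity),
      sq_id_complex a b ha hb y m m', ← hc_def, ← hD_def]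
    rw [show -((a + b) / (a * b) * ‖y - c‖ ^ 2 + D / (a + b))
        = (-(k * ‖y - c‖ ^ 2) + -(D / (2 * (a + b))))
          + (-(k * ‖y - c‖ ^ 2) + -(D / (2 * (a + b)))) by
      rw [hk_def]; field_simp; ring]
    rw [Real.exp_add, Real.sqrt_mul_self (Real.exp_nonneg _), Real.exp_add, hC_def]
    ring
  calc ∫ y : ℂ, Real.sqrt ((1 / (π * a)) * Real.exp (-‖y - m‖ ^ 2 / a)
        * ((1 / (π * b)) * Real.exp (-‖y - m'‖ ^ 2 / b)))
      = ∫ y : ℂ, C * Real.exp (-(k * ‖y - c‖ ^ 2)) :=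
        integral_congr_ae (Filter.Eventually.of_forall hpt)
    _ = C * (π / k) := by rw [MeasureTheory.integral_const_mul, gauss_int_complex k hk c]
    _ = _ := by
        rw [hC_def, hk_def,
          show -(D / (2 * (a + b))) = -D / (2 * (a + b)) by ring]
        have hab' : a + b ≠ 0 := by positivity
        field_simp
        ring_nf
        rw [hsa, hsb]

theorem rice_bhattacharyya (d : ℂ) (σ : ℝ) (hσ : 0 < σ) (x x' : ℂ) :
    ∫ y : ℂ, Real.sqrt (riceDensity d σ x y * riceDensity d σ x' y)
      = (2 * Real.sqrt (‖x‖ ^ 2 + σ ^ 2)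
            * Real.sqrt (‖x'‖ ^ 2 + σ ^ 2))
          / (‖x‖ ^ 2 + ‖x'‖ ^ 2 + 2 * σ ^ 2)
        * Real.exp (-(‖d‖) ^ 2 * (‖x - x'‖) ^ 2
            / (2 * (‖x‖ ^ 2 + ‖x'‖ ^ 2 + 2 * σ ^ 2))) := by
  have ha : (0:ℝ) < ‖x‖ ^ 2 + σ ^ 2 := by positivity
  have hb : (0:ℝ) < ‖x'‖ ^ 2 + σ ^ 2 := by positivity
  have h := bhatta_aux (‖x‖ ^ 2 + σ ^ 2) (‖x'‖ ^ 2 + σ ^ 2) ha hb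
    (d * x) (d * x')
  simp only [riceDensity]
  rw [h]
  have h1 : ‖d * x - d * x'‖ ^ 2 = ‖d‖ ^ 2 * ‖x - x'‖ ^ 2 := by
    rw [← mul_sub, norm_mul, mul_pow]
  have h2 : ‖x‖ ^ 2 + σ ^ 2 + (‖x'‖ ^ 2 + σ ^ 2)
      = ‖x‖ ^ 2 + ‖x'‖ ^ 2 + 2 * σ ^ 2 := by ring
  rw [h1, h2]
  ring_nf
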